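/- arXiv:2105.07080 — 2 statements merged into one kernel-verified Lean document; each statement's English description precedes it below -/
import Mathlib

section
/- KKT characterization of the optimizer with sparsity and box constraints: suppose Δ_opt maximizes ⟨Δ, M⟩ over ℋ ∩ B_ε and is not fully saturated, with m_{ij} ≠ 0 at some unsaturated entry. Then there exists θ ≥ 0 such that for each (i,j) ∈ E_p, either (Δ_opt)_{ij} = m_{ij}·θ (when m_{ij}θ ∈ (lo_{ij}, hi_{ij})), or (Δ_opt)_{ij} = hi_{ij} (when m_{ij}θ ≥ hi_{ij}), or (Δ_opt)_{ij} = lo_{ij} (when m_{ij}θ ≤ lo_{ij}); and (Δ_opt)_{ij} = 0 for (i,j) ∉ E_p. -/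
open scoped BigOperators

/-- Frobenius norm of a real matrix. -/
noncomputable def frobNormR {n : ℕ} (A : Matrix (Fin n) (Fin n) ℝ) : ℝ :=
  Real.sqrt (∑ i, ∑ j, (A i j) ^ 2)

/-- Membership in the structured constraint set
`ℋ = {Δ : Δ_{ij} = 0 for (i,j) ∉ E_p, Δ_{ij} ∈ [lo_{ij}, hi_{ij}] for (i,j) ∈ E_p}`. -/
def memH {n : ℕ} (Ep : Set (Fin n × Fin n)) (lo hi : Fin n → Fin n → ℝ)
    (Δ : Matrix (Fin n) (Fin n) ℝ) : Prop :=
  (∀ i j, (i, j) ∉ Ep → Δ i j = 0) ∧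
  (∀ i j, (i, j) ∈ Ep → lo i j ≤ Δ i j ∧ Δ i j ≤ hi i j)

private lemma rot_lemma (x y m p t₀ : ℝ) (ht₀ : 0 < t₀)
    (H : ∀ t : ℝ, 0 < t → t ≤ t₀ →
      m * (x + t*y) + p * (y - t*x) ≤ Real.sqrt (1 + t^2) * (m*x + p*y)) :
    m * y ≤ p * x := by
  have key : ∀ δ : ℝ, 0 < δ → m*y ≤ p*x + δ := by
    intro δ hδ
    set C := |m*x + p*y| with hC
    have hC0 : 0 ≤ C := abs_nonneg _
    set t := min t₀ (δ / (C+1)) with ht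
    have htpos : 0 < t := lt_min ht₀ (div_pos hδ (by linarith))
    have ht1 : t ≤ δ / (C+1) := min_le_right _ _
    have h1 := H t htpos (min_le_left _ _)
    set s := Real.sqrt (1 + t^2) with hs
    have hs2 : s^2 = 1 + t^2 := Real.sq_sqrt (by positivity)
    have hs1 : 1 ≤ s := Real.one_le_sqrt.mpr (by nlinarith)
    have hsle : s ≤ 1 + t^2 := by nlinarith
    have hle : m*x + p*y ≤ C := le_abs_self _
    have h2 : t*(m*y - p*x) ≤ (s-1)*C := by nlinarith
    have h3 : (s-1)*C ≤ t^2 * C := by nlinarith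
    have h4 : m*y - p*x ≤ t*C := by nlinarith
    have h5 : t*C ≤ δ := by
      have : t*(C+1) ≤ δ := by
        calc t * (C+1) ≤ (δ/(C+1)) * (C+1) :=
              mul_le_mul_of_nonneg_right ht1 (by linarith)
          _ = δ := div_mul_cancel₀ _ (by linarith)
      nlinarith
    linarith
  exact le_of_forall_pos_le_add key

private lemma box_div (z lo hi s : ℝ) (h1 : lo ≤ z) (h2 : z ≤ hi) (hlo : lo ≤ 0)
    (hhi : 0 ≤ hi) (hs : 1 ≤ s) : lo ≤ z / s ∧ z / s ≤ hi := by
  have hs0 : 0 < s := by linarith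
  constructor
  · rw [le_div_iff₀ hs0]; nlinarith
  · rw [div_le_iff₀ hs0]; nlinarith

private lemma dir_lemma (x y m p loa hia lob hib : ℝ)
    (hloa : loa < x) (hhia : x < hia) (hloa0 : loa ≤ 0) (hhia0 : 0 ≤ hia)
    (hlob : lob ≤ y) (hhib : y ≤ hib) (hlob0 : lob ≤ 0) (hhib0 : 0 ≤ hib)
    (hxm : 0 < x * m)
    (key : ∀ u v, loa ≤ u → u ≤ hia → lob ≤ v → v ≤ hib →
      u^2 + v^2 ≤ x^2 + y^2 → u*m + v*p ≤ x*m + y*p)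
    (hy : y < hib) : p * (x/m) ≤ y := by
  set K := |x| + |y| + 1 with hK
  have hxK : |x| ≤ K := by have := abs_nonneg y; simp [hK]; linarith
  have hyK : |y| ≤ K := by have := abs_nonneg x; simp [hK]; linarith
  have hK1 : (1:ℝ) ≤ K := by have := abs_nonneg x; have := abs_nonneg y; simp [hK]; linarith
  have hK0 : (0:ℝ) < K := by linarith
  have hx1 : -K ≤ x := by have := neg_abs_le x; linarith
  have hx2 : x ≤ K := by have := le_abs_self x; linarith
  have hy1 : -K ≤ y := by have := neg_abs_le y; linarith
  have hy2 : y ≤ K := by have := le_abs_self y; linarith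
  set t₀ := min 1 (min ((hia - x)/K) (min ((x - loa)/K) ((hib - y)/K))) with ht₀
  have ht₀pos : 0 < t₀ := by
    refine lt_min one_pos (lt_min (div_pos (by linarith) hK0)
      (lt_min (div_pos (by linarith) hK0) (div_pos (by linarith) hK0)))
  have hbounds : ∀ t : ℝ, 0 < t → t ≤ t₀ →
      t ≤ 1 ∧ t*K ≤ hia - x ∧ t*K ≤ x - loa ∧ t*K ≤ hib - y := by
    intro t ht ht'
    have h1 : t ≤ 1 := le_trans ht' (min_le_left _ _)
    have h2 : t ≤ (hia - x)/K := le_trans ht' (le_trans (min_le_right _ _) (min_le_left _ _))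
    have h3 : t ≤ (x - loa)/K := le_trans ht' (le_trans (min_le_right _ _)
        (le_trans (min_le_right _ _) (min_le_left _ _)))
    have h4 : t ≤ (hib - y)/K := le_trans ht' (le_trans (min_le_right _ _)
        (le_trans (min_le_right _ _) (min_le_right _ _)))
    exact ⟨h1, (le_div_iff₀ hK0).mp h2, (le_div_iff₀ hK0).mp h3, (le_div_iff₀ hK0).mp h4⟩
  rcases lt_or_gt_of_ne (fun h => by simp [h] at hxm : x ≠ 0) with hxneg | hxpos
  · -- x < 0, hence m < 0 ; rotation with +t
    have hm : m < 0 := by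
      by_contra h; push_neg at h
      nlinarith [mul_nonneg h (le_of_lt (neg_pos.mpr hxneg))]
    have main : m * y ≤ p * x := by
      apply rot_lemma x y m p t₀ ht₀pos
      intro t ht ht'
      obtain ⟨h1, h2, h3, h4⟩ := hbounds t ht ht'
      set s := Real.sqrt (1 + t^2) with hs
      have hs2 : s^2 = 1 + t^2 := Real.sq_sqrt (by positivity)
      have hs1 : 1 ≤ s := Real.one_le_sqrt.mpr (by nlinarith)
      have hs0 : 0 < s := by linarith
      set u := (x + t*y)/s with hu
      set v := (y - t*x)/s with hv
      have hu1 : loa ≤ u := by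
        rw [hu, le_div_iff₀ hs0]
        linarith [mul_nonneg ht.le (by linarith : (0:ℝ) ≤ y + K),
          mul_nonneg (by linarith : (0:ℝ) ≤ s - 1) (by linarith : (0:ℝ) ≤ -loa)]
      have hu2 : u ≤ hia := by
        rw [hu, div_le_iff₀ hs0]
        linarith [mul_nonneg ht.le (by linarith : (0:ℝ) ≤ K - y),
          mul_nonneg (by linarith : (0:ℝ) ≤ s - 1) hhia0]
      have hvb : lob ≤ y - t*x ∧ y - t*x ≤ hib :=
        ⟨by linarith [mul_nonneg ht.le (by linarith : (0:ℝ) ≤ -x)],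
         by linarith [mul_nonneg ht.le (by linarith : (0:ℝ) ≤ K + x)]⟩
      obtain ⟨hv1, hv2⟩ := box_div (y - t*x) lob hib s hvb.1 hvb.2 hlob0 hhib0 hs1
      have hnorm : u^2 + v^2 = x^2 + y^2 := by
        rw [hu, hv, div_pow, div_pow, ← add_div, hs2]
        rw [div_eq_iff (by positivity)]; ring
      have hkey := key u v hu1 hu2 hv1 hv2 (le_of_eq hnorm)
      have hu' : u*s = x + t*y := div_mul_cancel₀ _ hs0.ne'
      have hv' : v*s = y - t*x := div_mul_cancel₀ _ hs0.ne'
      calc m*(x + t*y) + p*(y - t*x) = (u*m + v*p)*s := by rw [← hu', ← hv']; ring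
        _ ≤ (x*m + y*p)*s := mul_le_mul_of_nonneg_right hkey hs0.le
        _ = s*(m*x + p*y) := by ring
    have heq : p * (x/m) = p*x/m := by ring
    rw [heq, div_le_iff_of_neg hm]; linarith
  · -- x > 0, hence m > 0 ; mirrored rotation
    have hm : 0 < m := by
      by_contra h; push_neg at h
      nlinarith [mul_nonneg hxpos.le (by linarith : (0:ℝ) ≤ -m)]
    have main : p * x ≤ m * y := by
      apply rot_lemma y x p m t₀ ht₀pos
      intro t ht ht'
      obtain ⟨h1, h2, h3, h4⟩ := hbounds t ht ht'
      set s := Real.sqrt (1 + t^2) with hs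
      have hs2 : s^2 = 1 + t^2 := Real.sq_sqrt (by positivity)
      have hs1 : 1 ≤ s := Real.one_le_sqrt.mpr (by nlinarith)
      have hs0 : 0 < s := by linarith
      set u := (x - t*y)/s with hu
      set v := (y + t*x)/s with hv
      have hu1 : loa ≤ u := by
        rw [hu, le_div_iff₀ hs0]
        linarith [mul_nonneg ht.le (by linarith : (0:ℝ) ≤ K - y),
          mul_nonneg (by linarith : (0:ℝ) ≤ s - 1) (by linarith : (0:ℝ) ≤ -loa)]
      have hu2 : u ≤ hia := by
        rw [hu, div_le_iff₀ hs0]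
        linarith [mul_nonneg ht.le (by linarith : (0:ℝ) ≤ K + y),
          mul_nonneg (by linarith : (0:ℝ) ≤ s - 1) hhia0]
      have hvb : lob ≤ y + t*x ∧ y + t*x ≤ hib :=
        ⟨by linarith [mul_nonneg ht.le hxpos.le],
         by linarith [mul_nonneg ht.le (by linarith : (0:ℝ) ≤ K - x)]⟩
      obtain ⟨hv1, hv2⟩ := box_div (y + t*x) lob hib s hvb.1 hvb.2 hlob0 hhib0 hs1
      have hnorm : u^2 + v^2 = x^2 + y^2 := by
        rw [hu, hv, div_pow, div_pow, ← add_div, hs2]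
        rw [div_eq_iff (by positivity)]; ring
      have hkey := key u v hu1 hu2 hv1 hv2 (le_of_eq hnorm)
      have hu' : u*s = x - t*y := div_mul_cancel₀ _ hs0.ne'
      have hv' : v*s = y + t*x := div_mul_cancel₀ _ hs0.ne'
      calc p*(y + t*x) + m*(x - t*y) = (u*m + v*p)*s := by rw [← hu', ← hv']; ring
        _ ≤ (x*m + y*p)*s := mul_le_mul_of_nonneg_right hkey hs0.le
        _ = s*(p*y + m*x) := by ring
    have heq : p * (x/m) = p*x/m := by ring
    rw [heq, div_le_iff₀ hm]; linarith

private lemma dir_lemma' (x y m p loa hia lob hib : ℝ)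
    (hloa : loa < x) (hhia : x < hia) (hloa0 : loa ≤ 0) (hhia0 : 0 ≤ hia)
    (hlob : lob ≤ y) (hhib : y ≤ hib) (hlob0 : lob ≤ 0) (hhib0 : 0 ≤ hib)
    (hxm : 0 < x * m)
    (key : ∀ u v, loa ≤ u → u ≤ hia → lob ≤ v → v ≤ hib →
      u^2 + v^2 ≤ x^2 + y^2 → u*m + v*p ≤ x*m + y*p)
    (hy : lob < y) : y ≤ p * (x/m) := by
  have hneg := dir_lemma (-x) (-y) (-m) (-p) (-hia) (-loa) (-hib) (-lob)
    (by linarith) (by linarith) (by linarith) (by linarith)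
    (by linarith) (by linarith) (by linarith) (by linarith)
    (by nlinarith)
    (by
      intro u v h1 h2 h3 h4 h5
      have := key (-u) (-v) (by linarith) (by linarith) (by linarith) (by linarith)
        (by nlinarith)
      nlinarith)
    (by linarith)
  have hx : -x / -m = x / m := by rw [neg_div_neg_eq]
  rw [hx] at hneg; linarith

private lemma zero_lemma (y m p loa hia lob hib : ℝ)
    (hloa : loa < 0) (hhia : 0 < hia)
    (hlob : lob ≤ y) (hhib : y ≤ hib) (hlob0 : lob ≤ 0) (hhib0 : 0 ≤ hib)
    (hm : m ≠ 0)
    (key : ∀ u v, loa ≤ u → u ≤ hia → lob ≤ v → v ≤ hib →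
      u^2 + v^2 ≤ 0^2 + y^2 → u*m + v*p ≤ 0*m + y*p) : y = 0 := by
  set K := |y| + 1 with hK
  have hyK : |y| ≤ K := by simp [hK]
  have hK1 : (1:ℝ) ≤ K := by have := abs_nonneg y; rw [hK]; linarith
  have hK0 : (0:ℝ) < K := by linarith
  have hy1 : -K ≤ y := by have := neg_abs_le y; linarith
  have hy2 : y ≤ K := by have := le_abs_self y; linarith
  set t₀ := min 1 (min (hia/K) ((-loa)/K)) with ht₀
  have ht₀pos : 0 < t₀ :=
    lt_min one_pos (lt_min (div_pos hhia hK0) (div_pos (by linarith) hK0))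
  have hbounds : ∀ t : ℝ, 0 < t → t ≤ t₀ → t*K ≤ hia ∧ t*K ≤ -loa := by
    intro t ht ht'
    have h2 : t ≤ hia/K := le_trans ht' (le_trans (min_le_right _ _) (min_le_left _ _))
    have h3 : t ≤ (-loa)/K := le_trans ht' (le_trans (min_le_right _ _) (min_le_right _ _))
    exact ⟨(le_div_iff₀ hK0).mp h2, (le_div_iff₀ hK0).mp h3⟩
  have c1 : m * y ≤ p * 0 := by
    apply rot_lemma 0 y m p t₀ ht₀pos
    intro t ht ht'
    obtain ⟨h2, h3⟩ := hbounds t ht ht'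
    set s := Real.sqrt (1 + t^2) with hs
    have hs2 : s^2 = 1 + t^2 := Real.sq_sqrt (by positivity)
    have hs1 : 1 ≤ s := Real.one_le_sqrt.mpr (by nlinarith)
    have hs0 : 0 < s := by linarith
    set u := (t*y)/s with hu
    set v := y/s with hv
    have hu1 : loa ≤ u := by
      rw [hu, le_div_iff₀ hs0]
      linarith [mul_nonneg ht.le (by linarith : (0:ℝ) ≤ K + y),
        mul_nonneg (by linarith : (0:ℝ) ≤ s - 1) (by linarith : (0:ℝ) ≤ -loa)]
    have hu2 : u ≤ hia := by
      rw [hu, div_le_iff₀ hs0]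
      linarith [mul_nonneg ht.le (by linarith : (0:ℝ) ≤ K - y),
        mul_nonneg (by linarith : (0:ℝ) ≤ s - 1) hhia.le]
    obtain ⟨hv1, hv2⟩ := box_div y lob hib s hlob hhib hlob0 hhib0 hs1
    have hnorm : u^2 + v^2 = 0^2 + y^2 := by
      rw [hu, hv, div_pow, div_pow, ← add_div, hs2]
      rw [div_eq_iff (by positivity)]; ring
    have hkey := key u v hu1 hu2 hv1 hv2 (le_of_eq hnorm)
    have hu' : u*s = t*y := div_mul_cancel₀ _ hs0.ne'
    have hv' : v*s = y := div_mul_cancel₀ _ hs0.ne'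
    calc m*(0 + t*y) + p*(y - t*0) = (u*m + v*p)*s := by rw [← hu', ← hv']; ring
      _ ≤ (0*m + y*p)*s := mul_le_mul_of_nonneg_right hkey hs0.le
      _ = s*(m*0 + p*y) := by ring
  have c2 : p * 0 ≤ m * y := by
    apply rot_lemma y 0 p m t₀ ht₀pos
    intro t ht ht'
    obtain ⟨h2, h3⟩ := hbounds t ht ht'
    set s := Real.sqrt (1 + t^2) with hs
    have hs2 : s^2 = 1 + t^2 := Real.sq_sqrt (by positivity)
    have hs1 : 1 ≤ s := Real.one_le_sqrt.mpr (by nlinarith)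
    have hs0 : 0 < s := by linarith
    set u := (0 - t*y)/s with hu
    set v := y/s with hv
    have hu1 : loa ≤ u := by
      rw [hu, le_div_iff₀ hs0]
      linarith [mul_nonneg ht.le (by linarith : (0:ℝ) ≤ K - y),
        mul_nonneg (by linarith : (0:ℝ) ≤ s - 1) (by linarith : (0:ℝ) ≤ -loa)]
    have hu2 : u ≤ hia := by
      rw [hu, div_le_iff₀ hs0]
      linarith [mul_nonneg ht.le (by linarith : (0:ℝ) ≤ K + y),
        mul_nonneg (by linarith : (0:ℝ) ≤ s - 1) hhia.le]
    obtain ⟨hv1, hv2⟩ := box_div y lob hib s hlob hhib hlob0 hhib0 hs1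
    have hnorm : u^2 + v^2 = 0^2 + y^2 := by
      rw [hu, hv, div_pow, div_pow, ← add_div, hs2]
      rw [div_eq_iff (by positivity)]; ring
    have hkey := key u v hu1 hu2 hv1 hv2 (le_of_eq hnorm)
    have hu' : u*s = 0 - t*y := div_mul_cancel₀ _ hs0.ne'
    have hv' : v*s = y := div_mul_cancel₀ _ hs0.ne'
    calc p*(y + t*0) + m*(0 - t*y) = (u*m + v*p)*s := by rw [← hu', ← hv']; ring
      _ ≤ (0*m + y*p)*s := mul_le_mul_of_nonneg_right hkey hs0.le
      _ = s*(p*y + m*0) := by ring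
  have : m * y = 0 := by simp at c1 c2; linarith
  exact (mul_eq_zero.mp this).resolve_left hm

private lemma sum_sub_two {α : Type*} [Fintype α] [DecidableEq α]
    (F G : α → ℝ) (a b : α) (hab : a ≠ b)
    (h : ∀ q, q ≠ a → q ≠ b → F q = G q) :
    ∑ q, F q = ∑ q, G q + ((F a - G a) + (F b - G b)) := by
  have h1 : ∑ q, (F q - G q) = (F a - G a) + (F b - G b) := by
    refine Finset.sum_eq_add a b hab ?_ ?_ ?_
    · intro c _ hc; rw [h c hc.1 hc.2]; ring
    · intro h'; exact absurd (Finset.mem_univ a) h'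
    · intro h'; exact absurd (Finset.mem_univ b) h'
  have h2 : ∑ q, (F q - G q) = ∑ q, F q - ∑ q, G q := Finset.sum_sub_distrib F G
  linarith

private lemma sum_sub_one {α : Type*} [Fintype α] [DecidableEq α]
    (F G : α → ℝ) (a : α) (h : ∀ q, q ≠ a → F q = G q) :
    ∑ q, F q = ∑ q, G q + (F a - G a) := by
  have h1 : ∑ q, (F q - G q) = F a - G a :=
    Finset.sum_eq_single_of_mem a (Finset.mem_univ a) (fun b _ hb => by rw [h b hb]; ring)
  have h2 : ∑ q, (F q - G q) = ∑ q, F q - ∑ q, G q := Finset.sum_sub_distrib F G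
  linarith

/-- KKT characterization of the optimizer with sparsity and box
constraints: there is `θ ≥ 0` such that each entry of `Δopt` on `E_p` is either
proportional to `m_{ij}` (with ratio `θ`, when `m_{ij}θ` lies strictly inside the
box) or saturated at the corresponding bound, and vanishes off `E_p`. -/
theorem kkt_characterization {n : ℕ} (Ep : Set (Fin n × Fin n)) (lo hi : Fin n → Fin n → ℝ)
    (hbox : ∀ i j, (i, j) ∈ Ep → lo i j ≤ 0 ∧ 0 ≤ hi i j)
    (ε : ℝ) (hε : 0 < ε) (M : Matrix (Fin n) (Fin n) ℝ)
    (Δopt : Matrix (Fin n) (Fin n) ℝ)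
    (hmem : memH Ep lo hi Δopt) (hball : frobNormR Δopt ≤ ε)
    (hmax : ∀ Δ, memH Ep lo hi Δ → frobNormR Δ ≤ ε →
      ∑ i, ∑ j, Δ i j * M i j ≤ ∑ i, ∑ j, Δopt i j * M i j)
    (hns : ∃ i j, (i, j) ∈ Ep ∧ lo i j < Δopt i j ∧ Δopt i j < hi i j ∧ M i j ≠ 0) :
    ∃ θ : ℝ, 0 ≤ θ ∧
      (∀ i j, (i, j) ∉ Ep → Δopt i j = 0) ∧
      (∀ i j, (i, j) ∈ Ep →
        ((lo i j < M i j * θ ∧ M i j * θ < hi i j → Δopt i j = M i j * θ) ∧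
         (hi i j ≤ M i j * θ → Δopt i j = hi i j) ∧
         (M i j * θ ≤ lo i j → Δopt i j = lo i j))) := by
  classical
  obtain ⟨i0, j0, ha, hlo, hhi, hm⟩ := hns
  obtain ⟨hloa0, hhia0⟩ := hbox i0 j0 ha
  -- two-point exchange inequality
  have key2 : ∀ i1 j1, (i1, j1) ∈ Ep → ((i1, j1) : Fin n × Fin n) ≠ (i0, j0) → ∀ u v,
      lo i0 j0 ≤ u → u ≤ hi i0 j0 → lo i1 j1 ≤ v → v ≤ hi i1 j1 →
      u^2 + v^2 ≤ (Δopt i0 j0)^2 + (Δopt i1 j1)^2 →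
      u * M i0 j0 + v * M i1 j1 ≤ Δopt i0 j0 * M i0 j0 + Δopt i1 j1 * M i1 j1 := by
    intro i1 j1 hb hne u v hu1 hu2 hv1 hv2 hn
    set Δ' : Matrix (Fin n) (Fin n) ℝ :=
      fun i j => if (i,j) = (i0,j0) then u else if (i,j) = (i1,j1) then v else Δopt i j
      with hΔ'
    have hval0 : Δ' i0 j0 = u := by simp [hΔ']
    have hval1 : Δ' i1 j1 = v := by
      have hne2 : ¬(i1 = i0 ∧ j1 = j0) := fun h => hne (by rw [h.1, h.2])
      simp [hΔ', hne2]
    have hvalo : ∀ q : Fin n × Fin n, q ≠ (i0,j0) → q ≠ (i1,j1) →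
        Δ' q.1 q.2 = Δopt q.1 q.2 := by
      rintro ⟨qi, qj⟩ h1 h2
      have h1' : ¬(qi = i0 ∧ qj = j0) := fun h => h1 (by rw [h.1, h.2])
      have h2' : ¬(qi = i1 ∧ qj = j1) := fun h => h2 (by rw [h.1, h.2])
      simp [hΔ', h1', h2']
    have hne' : ((i0,j0) : Fin n × Fin n) ≠ (i1,j1) := Ne.symm hne
    have hmem' : memH Ep lo hi Δ' := by
      constructor
      · intro i j hij
        have h1 : ((i,j) : Fin n × Fin n) ≠ (i0,j0) := fun h => hij (by rw [h]; exact ha)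
        have h2 : ((i,j) : Fin n × Fin n) ≠ (i1,j1) := fun h => hij (by rw [h]; exact hb)
        have h1' : ¬(i = i0 ∧ j = j0) := fun h => h1 (by rw [h.1, h.2])
        have h2' : ¬(i = i1 ∧ j = j1) := fun h => h2 (by rw [h.1, h.2])
        have : Δ' i j = Δopt i j := by simp [hΔ', h1', h2']
        rw [this]; exact hmem.1 i j hij
      · intro i j hij
        by_cases h1 : ((i,j) : Fin n × Fin n) = (i0,j0)
        · rw [Prod.mk.injEq] at h1; obtain ⟨rfl, rfl⟩ := h1
          rw [hval0]; exact ⟨hu1, hu2⟩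
        · by_cases h2 : ((i,j) : Fin n × Fin n) = (i1,j1)
          · rw [Prod.mk.injEq] at h2; obtain ⟨rfl, rfl⟩ := h2
            rw [hval1]; exact ⟨hv1, hv2⟩
          · have h1' : ¬(i = i0 ∧ j = j0) := fun h => h1 (by rw [h.1, h.2])
            have h2' : ¬(i = i1 ∧ j = j1) := fun h => h2 (by rw [h.1, h.2])
            have : Δ' i j = Δopt i j := by simp [hΔ', h1', h2']
            rw [this]; exact hmem.2 i j hij
    have hsq : ∑ q : Fin n × Fin n, (Δ' q.1 q.2)^2
        = ∑ q : Fin n × Fin n, (Δopt q.1 q.2)^2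
          + ((u^2 - (Δopt i0 j0)^2) + (v^2 - (Δopt i1 j1)^2)) := by
      have := sum_sub_two (fun q => (Δ' q.1 q.2)^2) (fun q => (Δopt q.1 q.2)^2)
        (i0,j0) (i1,j1) hne'
        (fun q h1 h2 => show (Δ' q.1 q.2)^2 = (Δopt q.1 q.2)^2 by rw [hvalo q h1 h2])
      simpa [hval0, hval1] using this
    have e1 : ∑ q : Fin n × Fin n, (Δ' q.1 q.2)^2 = ∑ i, ∑ j, (Δ' i j)^2 :=
      Fintype.sum_prod_type _
    have e2 : ∑ q : Fin n × Fin n, (Δopt q.1 q.2)^2 = ∑ i, ∑ j, (Δopt i j)^2 :=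
      Fintype.sum_prod_type _
    rw [e1, e2] at hsq
    have hsum : ∑ i, ∑ j, (Δ' i j)^2 ≤ ∑ i, ∑ j, (Δopt i j)^2 := by linarith
    have hball' : frobNormR Δ' ≤ ε := by
      unfold frobNormR
      exact le_trans (Real.sqrt_le_sqrt hsum) hball
    have hobj := hmax Δ' hmem' hball'
    have hsq2 : ∑ q : Fin n × Fin n, Δ' q.1 q.2 * M q.1 q.2
        = ∑ q : Fin n × Fin n, Δopt q.1 q.2 * M q.1 q.2
          + ((u * M i0 j0 - Δopt i0 j0 * M i0 j0)
            + (v * M i1 j1 - Δopt i1 j1 * M i1 j1)) := by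
      have := sum_sub_two (fun q => Δ' q.1 q.2 * M q.1 q.2)
        (fun q => Δopt q.1 q.2 * M q.1 q.2)
        (i0,j0) (i1,j1) hne'
        (fun q h1 h2 => show Δ' q.1 q.2 * M q.1 q.2 = Δopt q.1 q.2 * M q.1 q.2 by
          rw [hvalo q h1 h2])
      simpa [hval0, hval1] using this
    have e3 : ∑ q : Fin n × Fin n, Δ' q.1 q.2 * M q.1 q.2 = ∑ i, ∑ j, Δ' i j * M i j :=
      Fintype.sum_prod_type _
    have e4 : ∑ q : Fin n × Fin n, Δopt q.1 q.2 * M q.1 q.2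
        = ∑ i, ∑ j, Δopt i j * M i j := Fintype.sum_prod_type _
    rw [e3, e4] at hsq2
    linarith
  -- one-point inequality : 0 ≤ x * m
  have key1 : 0 ≤ Δopt i0 j0 * M i0 j0 := by
    set Δ' : Matrix (Fin n) (Fin n) ℝ :=
      fun i j => if (i,j) = (i0,j0) then (0:ℝ) else Δopt i j with hΔ'
    have hval0 : Δ' i0 j0 = 0 := by simp [hΔ']
    have hvalo : ∀ q : Fin n × Fin n, q ≠ (i0,j0) → Δ' q.1 q.2 = Δopt q.1 q.2 := by
      rintro ⟨qi, qj⟩ h1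
      have h1' : ¬(qi = i0 ∧ qj = j0) := fun h => h1 (by rw [h.1, h.2])
      simp [hΔ', h1']
    have hmem' : memH Ep lo hi Δ' := by
      constructor
      · intro i j hij
        have h1 : ((i,j) : Fin n × Fin n) ≠ (i0,j0) := fun h => hij (by rw [h]; exact ha)
        have h1' : ¬(i = i0 ∧ j = j0) := fun h => h1 (by rw [h.1, h.2])
        have : Δ' i j = Δopt i j := by simp [hΔ', h1']
        rw [this]; exact hmem.1 i j hij
      · intro i j hij
        by_cases h1 : ((i,j) : Fin n × Fin n) = (i0,j0)
        · rw [Prod.mk.injEq] at h1; obtain ⟨rfl, rfl⟩ := h1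
          rw [hval0]; exact ⟨hloa0, hhia0⟩
        · have h1' : ¬(i = i0 ∧ j = j0) := fun h => h1 (by rw [h.1, h.2])
          have : Δ' i j = Δopt i j := by simp [hΔ', h1']
          rw [this]; exact hmem.2 i j hij
    have hsq : ∑ q : Fin n × Fin n, (Δ' q.1 q.2)^2
        = ∑ q : Fin n × Fin n, (Δopt q.1 q.2)^2 + ((0:ℝ)^2 - (Δopt i0 j0)^2) := by
      have := sum_sub_one (fun q => (Δ' q.1 q.2)^2) (fun q => (Δopt q.1 q.2)^2)
        (i0,j0) (fun q h1 => show (Δ' q.1 q.2)^2 = (Δopt q.1 q.2)^2 by rw [hvalo q h1])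
      simpa [hval0] using this
    have e1 : ∑ q : Fin n × Fin n, (Δ' q.1 q.2)^2 = ∑ i, ∑ j, (Δ' i j)^2 :=
      Fintype.sum_prod_type _
    have e2 : ∑ q : Fin n × Fin n, (Δopt q.1 q.2)^2 = ∑ i, ∑ j, (Δopt i j)^2 :=
      Fintype.sum_prod_type _
    rw [e1, e2] at hsq
    have hsum : ∑ i, ∑ j, (Δ' i j)^2 ≤ ∑ i, ∑ j, (Δopt i j)^2 := by nlinarith [sq_nonneg (Δopt i0 j0)]
    have hball' : frobNormR Δ' ≤ ε := by
      unfold frobNormR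
      exact le_trans (Real.sqrt_le_sqrt hsum) hball
    have hobj := hmax Δ' hmem' hball'
    have hsq2 : ∑ q : Fin n × Fin n, Δ' q.1 q.2 * M q.1 q.2
        = ∑ q : Fin n × Fin n, Δopt q.1 q.2 * M q.1 q.2
          + ((0:ℝ) * M i0 j0 - Δopt i0 j0 * M i0 j0) := by
      have := sum_sub_one (fun q => Δ' q.1 q.2 * M q.1 q.2)
        (fun q => Δopt q.1 q.2 * M q.1 q.2) (i0,j0)
        (fun q h1 => show Δ' q.1 q.2 * M q.1 q.2 = Δopt q.1 q.2 * M q.1 q.2 by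
          rw [hvalo q h1])
      simpa [hval0] using this
    have e3 : ∑ q : Fin n × Fin n, Δ' q.1 q.2 * M q.1 q.2 = ∑ i, ∑ j, Δ' i j * M i j :=
      Fintype.sum_prod_type _
    have e4 : ∑ q : Fin n × Fin n, Δopt q.1 q.2 * M q.1 q.2
        = ∑ i, ∑ j, Δopt i j * M i j := Fintype.sum_prod_type _
    rw [e3, e4] at hsq2
    have := hmax Δ' hmem' hball'
    nlinarith
  by_cases hx : Δopt i0 j0 = 0
  · -- degenerate case : everything is zero, take θ = 0
    have hzero : ∀ i j, (i, j) ∈ Ep → Δopt i j = 0 := by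
      intro i j hij
      by_cases hc : ((i,j) : Fin n × Fin n) = (i0,j0)
      · rw [Prod.mk.injEq] at hc; obtain ⟨rfl, rfl⟩ := hc; exact hx
      · obtain ⟨hbl, hbh⟩ := hbox i j hij
        obtain ⟨hml, hmh⟩ := hmem.2 i j hij
        refine zero_lemma (Δopt i j) (M i0 j0) (M i j) (lo i0 j0) (hi i0 j0)
          (lo i j) (hi i j) (by rw [hx] at hlo; exact hlo) (by rw [hx] at hhi; exact hhi)
          hml hmh hbl hbh hm ?_
        intro u v h1 h2 h3 h4 h5
        have := key2 i j hij hc u v h1 h2 h3 h4 (by rw [hx]; exact h5)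
        rw [hx] at this; exact this
    refine ⟨0, le_refl 0, hmem.1, ?_⟩
    intro i j hij
    have hz := hzero i j hij
    obtain ⟨hbl, hbh⟩ := hbox i j hij
    refine ⟨fun h => ?_, fun h => ?_, fun h => ?_⟩
    · rw [mul_zero]; exact hz
    · rw [mul_zero] at h; linarith
    · rw [mul_zero] at h; linarith
  · -- nondegenerate case : θ = x / m > 0
    have hxm : 0 < Δopt i0 j0 * M i0 j0 :=
      lt_of_le_of_ne key1 (Ne.symm (mul_ne_zero hx hm))
    set θ := Δopt i0 j0 / M i0 j0 with hθ
    have hθpos : 0 < θ := div_pos_iff.mpr (mul_pos_iff.mp hxm)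
    have hMθ : M i0 j0 * θ = Δopt i0 j0 := by
      rw [hθ, mul_comm]; exact div_mul_cancel₀ _ hm
    refine ⟨θ, hθpos.le, hmem.1, ?_⟩
    intro i j hij
    by_cases hc : ((i,j) : Fin n × Fin n) = (i0,j0)
    · rw [Prod.mk.injEq] at hc; obtain ⟨rfl, rfl⟩ := hc
      rw [hMθ]
      exact ⟨fun _ => rfl, fun h => absurd h (by linarith), fun h => absurd h (by linarith)⟩
    · obtain ⟨hbl, hbh⟩ := hbox i j hij
      obtain ⟨hml, hmh⟩ := hmem.2 i j hij
      have hA : Δopt i j < hi i j → M i j * θ ≤ Δopt i j := by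
        intro hyy
        exact dir_lemma (Δopt i0 j0) (Δopt i j) (M i0 j0) (M i j) (lo i0 j0) (hi i0 j0)
          (lo i j) (hi i j) hlo hhi hloa0 hhia0 hml hmh hbl hbh hxm
          (key2 i j hij hc) hyy
      have hB : lo i j < Δopt i j → Δopt i j ≤ M i j * θ := by
        intro hyy
        exact dir_lemma' (Δopt i0 j0) (Δopt i j) (M i0 j0) (M i j) (lo i0 j0) (hi i0 j0)
          (lo i j) (hi i j) hlo hhi hloa0 hhia0 hml hmh hbl hbh hxm
          (key2 i j hij hc) hyy
      refine ⟨fun h => ?_, fun h => ?_, fun h => ?_⟩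
      · obtain ⟨h1, h2⟩ := h
        have hyhi : Δopt i j < hi i j := by
          rcases lt_or_eq_of_le hmh with h' | h'
          · exact h'
          · exfalso
            have := hB (by linarith)
            linarith
        have hA' := hA hyhi
        have hylo : lo i j < Δopt i j := by linarith
        have hB' := hB hylo
        linarith
      · by_contra hne2
        have hyhi : Δopt i j < hi i j := lt_of_le_of_ne hmh hne2
        have := hA hyhi
        linarith
      · by_contra hne2
        have hylo : lo i j < Δopt i j := lt_of_le_of_ne hml (Ne.symm hne2)
        have := hB hylo
        linarith
end

section
/- Local Lipschitz dependence of the optimizer on the objective matrix: let Δ_opt and Δ̃_opt be maximizers of ⟨Δ, M⟩ and ⟨Δ, M̃⟩ respectively over ℋ ∩ B_ε, with M, M̃ ∈ ℝ^{n×n} of Frobenius norm at most 1, and suppose the non-saturation assumption holds for (Δ_opt, M). Then there exist δ, c > 0 such that ‖Δ̃_opt − Δ_opt‖_F ≤ c·ε·‖M̃ − M‖_F whenever ‖M̃ − M‖_F ≤ δ. -/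
open scoped BigOperators

open Finset
namespace S14
variable {n : ℕ}

lemma dsum (F : Fin n → Fin n → ℝ) : ∑ i, ∑ j, F i j = ∑ p : Fin n × Fin n, F p.1 p.2 :=
  (Fintype.sum_prod_type (fun p : Fin n × Fin n => F p.1 p.2)).symm

/-- two-point update of a matrix -/
def upd2 (Δ : Matrix (Fin n) (Fin n) ℝ) (a b : Fin n × Fin n) (x y : ℝ) :
    Matrix (Fin n) (Fin n) ℝ :=
  fun i j => if (i, j) = a then x else if (i, j) = b then y else Δ i j

lemma upd2_a (Δ : Matrix (Fin n) (Fin n) ℝ) (a b : Fin n × Fin n) (x y : ℝ) :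
    upd2 Δ a b x y a.1 a.2 = x := by simp [upd2]

lemma upd2_b (Δ : Matrix (Fin n) (Fin n) ℝ) {a b : Fin n × Fin n} (hab : a ≠ b) (x y : ℝ) :
    upd2 Δ a b x y b.1 b.2 = y := by simp [upd2, hab.symm]

lemma upd2_off (Δ : Matrix (Fin n) (Fin n) ℝ) {a b p : Fin n × Fin n} (hpa : p ≠ a)
    (hpb : p ≠ b) (x y : ℝ) : upd2 Δ a b x y p.1 p.2 = Δ p.1 p.2 := by
  simp [upd2, hpa, hpb]

/-- one-point update of a matrix -/
def upd1 (Δ : Matrix (Fin n) (Fin n) ℝ) (a : Fin n × Fin n) (x : ℝ) :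
    Matrix (Fin n) (Fin n) ℝ :=
  fun i j => if (i, j) = a then x else Δ i j

lemma upd1_a (Δ : Matrix (Fin n) (Fin n) ℝ) (a : Fin n × Fin n) (x : ℝ) :
    upd1 Δ a x a.1 a.2 = x := by simp [upd1]

lemma upd1_off (Δ : Matrix (Fin n) (Fin n) ℝ) {a p : Fin n × Fin n} (hpa : p ≠ a) (x : ℝ) :
    upd1 Δ a x p.1 p.2 = Δ p.1 p.2 := by simp [upd1, hpa]



variable {n : ℕ}


lemma sum_expand2 {ι : Type*} [Fintype ι] [DecidableEq ι] (F : ι → ℝ) (a b : ι) (hab : a ≠ b) :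
    ∑ p, F p = F a + F b + ∑ p ∈ (Finset.univ.erase b).erase a, F p := by
  rw [← Finset.add_sum_erase _ F (Finset.mem_univ b),
    ← Finset.add_sum_erase _ F (Finset.mem_erase.2 ⟨hab, Finset.mem_univ a⟩)]
  ring

lemma sum_expand1 {ι : Type*} [Fintype ι] [DecidableEq ι] (F : ι → ℝ) (a : ι) :
    ∑ p, F p = F a + ∑ p ∈ Finset.univ.erase a, F p :=
  (Finset.add_sum_erase _ F (Finset.mem_univ a)).symm

lemma sum_upd2 {ι : Type*} [Fintype ι] [DecidableEq ι] (F G : ι → ℝ) (a b : ι) (hab : a ≠ b)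
    (h : ∀ p, p ≠ a → p ≠ b → F p = G p) :
    ∑ p, F p = ∑ p, G p + (F a - G a) + (F b - G b) := by
  rw [sum_expand2 F a b hab, sum_expand2 G a b hab,
    Finset.sum_congr rfl (fun p hp => by
      rcases Finset.mem_erase.1 hp with ⟨hpa, hp2⟩
      exact h p hpa (Finset.mem_erase.1 hp2).1)]
  ring

lemma sum_upd1 {ι : Type*} [Fintype ι] [DecidableEq ι] (F G : ι → ℝ) (a : ι)
    (h : ∀ p, p ≠ a → F p = G p) :
    ∑ p, F p = ∑ p, G p + (F a - G a) := by
  rw [sum_expand1 F a, sum_expand1 G a,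
    Finset.sum_congr rfl (fun p hp => h p (Finset.mem_erase.1 hp).1)]
  ring


-- continues inside namespace S14 (testing separately with context pasted)

lemma sum2_upd2 (H : (Fin n × Fin n) → ℝ → ℝ) (Δ : Matrix (Fin n) (Fin n) ℝ)
    {a b : Fin n × Fin n} (hab : a ≠ b) (x y : ℝ) :
    ∑ i, ∑ j, H (i, j) (upd2 Δ a b x y i j) =
      (∑ i, ∑ j, H (i, j) (Δ i j)) + (H a x - H a (Δ a.1 a.2)) + (H b y - H b (Δ b.1 b.2)) := by
  rw [dsum (fun i j => H (i, j) (upd2 Δ a b x y i j)), dsum (fun i j => H (i, j) (Δ i j))]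
  have := sum_upd2 (fun p : Fin n × Fin n => H p (upd2 Δ a b x y p.1 p.2))
    (fun p : Fin n × Fin n => H p (Δ p.1 p.2)) a b hab
    (fun p hpa hpb => by rw [upd2_off Δ hpa hpb])
  simpa [upd2_a, upd2_b Δ hab] using this

lemma sum2_upd1 (H : (Fin n × Fin n) → ℝ → ℝ) (Δ : Matrix (Fin n) (Fin n) ℝ)
    (a : Fin n × Fin n) (x : ℝ) :
    ∑ i, ∑ j, H (i, j) (upd1 Δ a x i j) =
      (∑ i, ∑ j, H (i, j) (Δ i j)) + (H a x - H a (Δ a.1 a.2)) := by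
  rw [dsum (fun i j => H (i, j) (upd1 Δ a x i j)), dsum (fun i j => H (i, j) (Δ i j))]
  have := sum_upd1 (fun p : Fin n × Fin n => H p (upd1 Δ a x p.1 p.2))
    (fun p : Fin n × Fin n => H p (Δ p.1 p.2)) a
    (fun p hpa => by rw [upd1_off Δ hpa])
  simpa [upd1_a] using this

lemma frob_le_iff {r : ℝ} (hr : 0 ≤ r) (A : Matrix (Fin n) (Fin n) ℝ) :
    frobNormR A ≤ r ↔ ∑ i, ∑ j, (A i j) ^ 2 ≤ r ^ 2 := by
  have hx : (0:ℝ) ≤ ∑ i, ∑ j, (A i j) ^ 2 :=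
    Finset.sum_nonneg fun i _ => Finset.sum_nonneg fun j _ => sq_nonneg _
  unfold frobNormR
  constructor
  · intro h
    calc ∑ i, ∑ j, (A i j) ^ 2 = Real.sqrt (∑ i, ∑ j, (A i j) ^ 2) ^ 2 :=
          (Real.sq_sqrt hx).symm
      _ ≤ r ^ 2 := by nlinarith [Real.sqrt_nonneg (∑ i, ∑ j, (A i j) ^ 2)]
  · intro h
    calc Real.sqrt (∑ i, ∑ j, (A i j) ^ 2) ≤ Real.sqrt (r ^ 2) := Real.sqrt_le_sqrt h
      _ = r := Real.sqrt_sq hr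

lemma obj_upd2 (Δ M : Matrix (Fin n) (Fin n) ℝ) {a b : Fin n × Fin n} (hab : a ≠ b) (x y : ℝ) :
    ∑ i, ∑ j, upd2 Δ a b x y i j * M i j =
      (∑ i, ∑ j, Δ i j * M i j) + (x - Δ a.1 a.2) * M a.1 a.2 + (y - Δ b.1 b.2) * M b.1 b.2 := by
  have := sum2_upd2 (fun p v => v * M p.1 p.2) Δ hab x y
  simp only [] at this
  rw [this]; ring

lemma nsq_upd2 (Δ : Matrix (Fin n) (Fin n) ℝ) {a b : Fin n × Fin n} (hab : a ≠ b) (x y : ℝ) :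
    ∑ i, ∑ j, (upd2 Δ a b x y i j) ^ 2 =
      (∑ i, ∑ j, (Δ i j) ^ 2) + (x ^ 2 - (Δ a.1 a.2) ^ 2) + (y ^ 2 - (Δ b.1 b.2) ^ 2) := by
  have := sum2_upd2 (fun _ v => v ^ 2) Δ hab x y
  rw [this]

lemma obj_upd1 (Δ M : Matrix (Fin n) (Fin n) ℝ) (a : Fin n × Fin n) (x : ℝ) :
    ∑ i, ∑ j, upd1 Δ a x i j * M i j =
      (∑ i, ∑ j, Δ i j * M i j) + (x - Δ a.1 a.2) * M a.1 a.2 := by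
  have := sum2_upd1 (fun p v => v * M p.1 p.2) Δ a x
  simp only [] at this
  rw [this]; ring

lemma nsq_upd1 (Δ : Matrix (Fin n) (Fin n) ℝ) (a : Fin n × Fin n) (x : ℝ) :
    ∑ i, ∑ j, (upd1 Δ a x i j) ^ 2 =
      (∑ i, ∑ j, (Δ i j) ^ 2) + (x ^ 2 - (Δ a.1 a.2) ^ 2) := by
  have := sum2_upd1 (fun _ v => v ^ 2) Δ a x
  rw [this]

/-- entrywise feasibility of a value -/
def feas (Ep : Set (Fin n × Fin n)) (lo hi : Fin n → Fin n → ℝ) (p : Fin n × Fin n) (v : ℝ) :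
    Prop :=
  (p ∉ Ep → v = 0) ∧ (p ∈ Ep → lo p.1 p.2 ≤ v ∧ v ≤ hi p.1 p.2)

lemma memH_upd2 {Ep : Set (Fin n × Fin n)} {lo hi : Fin n → Fin n → ℝ}
    {Δ : Matrix (Fin n) (Fin n) ℝ} (hmem : memH Ep lo hi Δ) {a b : Fin n × Fin n}
    {x y : ℝ} (hx : feas Ep lo hi a x) (hy : feas Ep lo hi b y) (hab : a ≠ b) :
    memH Ep lo hi (upd2 Δ a b x y) := by
  constructor
  · intro i j hij
    by_cases h1 : (i, j) = a
    · subst h1; rw [upd2_a]; exact hx.1 hij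
    · by_cases h2 : (i, j) = b
      · subst h2; rw [upd2_b Δ hab]; exact hy.1 hij
      · rw [upd2_off Δ h1 h2]; exact hmem.1 i j hij
  · intro i j hij
    by_cases h1 : (i, j) = a
    · subst h1; rw [upd2_a]; exact hx.2 hij
    · by_cases h2 : (i, j) = b
      · subst h2; rw [upd2_b Δ hab]; exact hy.2 hij
      · rw [upd2_off Δ h1 h2]; exact hmem.2 i j hij

lemma memH_upd1 {Ep : Set (Fin n × Fin n)} {lo hi : Fin n → Fin n → ℝ}
    {Δ : Matrix (Fin n) (Fin n) ℝ} (hmem : memH Ep lo hi Δ) {a : Fin n × Fin n}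
    {x : ℝ} (hx : feas Ep lo hi a x) :
    memH Ep lo hi (upd1 Δ a x) := by
  constructor
  · intro i j hij
    by_cases h1 : (i, j) = a
    · subst h1; rw [upd1_a]; exact hx.1 hij
    · rw [upd1_off Δ h1]; exact hmem.1 i j hij
  · intro i j hij
    by_cases h1 : (i, j) = a
    · subst h1; rw [upd1_a]; exact hx.2 hij
    · rw [upd1_off Δ h1]; exact hmem.2 i j hij

lemma no_improve2 {Ep : Set (Fin n × Fin n)} {lo hi : Fin n → Fin n → ℝ} {ε : ℝ} (hε : 0 < ε)
    {M Δopt : Matrix (Fin n) (Fin n) ℝ} (hmem : memH Ep lo hi Δopt)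
    (hmax : ∀ Δ, memH Ep lo hi Δ → frobNormR Δ ≤ ε →
      ∑ i, ∑ j, Δ i j * M i j ≤ ∑ i, ∑ j, Δopt i j * M i j)
    {a b : Fin n × Fin n} (hab : a ≠ b) {x y : ℝ}
    (hx : feas Ep lo hi a x) (hy : feas Ep lo hi b y)
    (hnorm : (∑ i, ∑ j, (Δopt i j) ^ 2) + (x ^ 2 - (Δopt a.1 a.2) ^ 2)
      + (y ^ 2 - (Δopt b.1 b.2) ^ 2) ≤ ε ^ 2)
    (hobj : 0 < (x - Δopt a.1 a.2) * M a.1 a.2 + (y - Δopt b.1 b.2) * M b.1 b.2) : False := by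
  have hm := memH_upd2 hmem hx hy hab
  have hfb : frobNormR (upd2 Δopt a b x y) ≤ ε := by
    rw [frob_le_iff hε.le, nsq_upd2 Δopt hab x y]; exact hnorm
  have := hmax _ hm hfb
  rw [obj_upd2 Δopt M hab x y] at this
  linarith

lemma no_improve1 {Ep : Set (Fin n × Fin n)} {lo hi : Fin n → Fin n → ℝ} {ε : ℝ} (hε : 0 < ε)
    {M Δopt : Matrix (Fin n) (Fin n) ℝ} (hmem : memH Ep lo hi Δopt)
    (hmax : ∀ Δ, memH Ep lo hi Δ → frobNormR Δ ≤ ε →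
      ∑ i, ∑ j, Δ i j * M i j ≤ ∑ i, ∑ j, Δopt i j * M i j)
    {a : Fin n × Fin n} {x : ℝ} (hx : feas Ep lo hi a x)
    (hnorm : (∑ i, ∑ j, (Δopt i j) ^ 2) + (x ^ 2 - (Δopt a.1 a.2) ^ 2) ≤ ε ^ 2)
    (hobj : 0 < (x - Δopt a.1 a.2) * M a.1 a.2) : False := by
  have hm := memH_upd1 hmem hx
  have hfb : frobNormR (upd1 Δopt a x) ≤ ε := by
    rw [frob_le_iff hε.le, nsq_upd1 Δopt a x]; linarith
  have := hmax _ hm hfb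
  rw [obj_upd1 Δopt M a x] at this
  linarith



lemma sign_of_ne {v : ℝ} (hv : v ≠ 0) : ∃ e : ℝ, (e = 1 ∨ e = -1) ∧ 0 < e * v := by
  rcases lt_or_gt_of_ne hv with h1 | h1
  · exact ⟨-1, Or.inr rfl, by linarith only [h1]⟩
  · exact ⟨1, Or.inl rfl, by linarith only [h1]⟩

/-- Core of Step 1 : if the ball constraint is slack we can improve. -/
lemma step1_core (ε q mbv loc hic N : ℝ) (hε : 0 < ε) (hblo : loc < q) (hbhi : q < hic)
    (hmb : mbv ≠ 0) (hq2 : q ^ 2 ≤ N) (hlt : N < ε ^ 2) :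
    ∃ x, loc ≤ x ∧ x ≤ hic ∧ N + (x ^ 2 - q ^ 2) ≤ ε ^ 2 ∧ 0 < (x - q) * mbv := by
  obtain ⟨e, he, hemb⟩ := sign_of_ne hmb
  have he1 : -1 ≤ e := by rcases he with rfl | rfl <;> norm_num
  have he1' : e ≤ 1 := by rcases he with rfl | rfl <;> norm_num
  have he2 : e * e = 1 := by rcases he with rfl | rfl <;> norm_num
  have hden : (0:ℝ) < 2 * ε + 1 := by linarith only [hε]
  set s : ℝ := min (min (hic - q) (q - loc)) (min 1 ((ε ^ 2 - N) / (2 * ε + 1))) with hsdef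
  have hs : 0 < s :=
    lt_min (lt_min (by linarith only [hbhi]) (by linarith only [hblo]))
      (lt_min one_pos (div_pos (by linarith only [hlt]) hden))
  have hs1 : s ≤ hic - q := le_trans (min_le_left _ _) (min_le_left _ _)
  have hs2 : s ≤ q - loc := le_trans (min_le_left _ _) (min_le_right _ _)
  have hs3 : s ≤ 1 := le_trans (min_le_right _ _) (min_le_left _ _)
  have hs4 : s * (2 * ε + 1) ≤ ε ^ 2 - N := by
    have h5 : s ≤ (ε ^ 2 - N) / (2 * ε + 1) := le_trans (min_le_right _ _) (min_le_right _ _)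
    calc s * (2 * ε + 1) ≤ (ε ^ 2 - N) / (2 * ε + 1) * (2 * ε + 1) :=
          mul_le_mul_of_nonneg_right h5 hden.le
      _ = ε ^ 2 - N := by field_simp
  clear_value s
  clear hsdef
  have hq2' : q ^ 2 ≤ ε ^ 2 := le_trans hq2 hlt.le
  have heqsq : (e * q) ^ 2 ≤ ε ^ 2 := by
    have h6 : (e * q) ^ 2 = q ^ 2 := by linear_combination q ^ 2 * he2
    linarith only [h6, hq2']
  have heq : e * q ≤ ε := (abs_le_of_sq_le_sq' heqsq hε.le).2
  have hp1 : 0 ≤ s * (e + 1) := mul_nonneg hs.le (by linarith only [he1])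
  have hp2 : 0 ≤ s * (1 - e) := mul_nonneg hs.le (by linarith only [he1'])
  refine ⟨q + s * e, by linarith only [hp1, hs2], by linarith only [hp2, hs1], ?_, ?_⟩
  · have hsee : (q + s * e) ^ 2 - q ^ 2 = 2 * s * (e * q) + s ^ 2 := by
      linear_combination s ^ 2 * he2
    have h7 : s * (e * q) ≤ s * ε := mul_le_mul_of_nonneg_left heq hs.le
    have h8 : s * s ≤ s * 1 := mul_le_mul_of_nonneg_left hs3 hs.le
    linarith only [hsee, h7, h8, hs4]
  · have h9 : (q + s * e - q) * mbv = s * (e * mbv) := by ring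
    rw [h9]
    exact mul_pos hs hemb

/-- Core of Step 2 (case `q = 0`). -/
lemma step2_core (qc mbv mcv lob hib loc hic : ℝ) (hmb : mbv ≠ 0) (hqc : qc ≠ 0)
    (hlob : lob < 0) (hhib : 0 < hib) (hlc : loc ≤ 0) (hhc : 0 ≤ hic)
    (hfcl : loc ≤ qc) (hfch : qc ≤ hic) :
    ∃ x y, lob ≤ x ∧ x ≤ hib ∧ loc ≤ y ∧ y ≤ hic ∧
      x ^ 2 + (y ^ 2 - qc ^ 2) ≤ 0 ∧ 0 < x * mbv + (y - qc) * mcv := by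
  obtain ⟨e, he, hemb⟩ := sign_of_ne hmb
  have he1 : -1 ≤ e := by rcases he with rfl | rfl <;> norm_num
  have he1' : e ≤ 1 := by rcases he with rfl | rfl <;> norm_num
  have he2 : e * e = 1 := by rcases he with rfl | rfl <;> norm_num
  obtain ⟨f, hf, hfqc⟩ := sign_of_ne hqc
  have hf2 : f * f = 1 := by rcases hf with rfl | rfl <;> norm_num
  set aq : ℝ := f * qc with haq_def
  have haq : 0 < aq := hfqc
  have hfq : f * qc = aq := rfl
  clear_value aq
  clear haq_def
  set amc : ℝ := |mcv| with hamc_def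
  have hamc1 : mcv ≤ amc := le_abs_self mcv
  have hamc0 : 0 ≤ amc := abs_nonneg mcv
  have hfmc : f * mcv ≤ amc := by
    have h1 : (f * mcv) ^ 2 ≤ amc ^ 2 := by
      rw [hamc_def, sq_abs]; linarith only [(by linear_combination mcv ^ 2 * hf2 :
        (f * mcv) ^ 2 = mcv ^ 2)]
    exact (abs_le_of_sq_le_sq' h1 hamc0).2
  clear_value amc
  clear hamc_def
  have haqne : aq ≠ 0 := ne_of_gt haq
  set s : ℝ := min (min hib (-lob)) (min aq (e * mbv * aq / (2 * (amc + 1)))) with hsdef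
  have hs : 0 < s :=
    lt_min (lt_min hhib (by linarith only [hlob]))
      (lt_min haq (div_pos (mul_pos hemb haq) (by linarith only [hamc0])))
  have hsA : s ≤ hib := le_trans (min_le_left _ _) (min_le_left _ _)
  have hsB : s ≤ -lob := le_trans (min_le_left _ _) (min_le_right _ _)
  have hsC : s ≤ aq := le_trans (min_le_right _ _) (min_le_left _ _)
  have hsD : s * (2 * (amc + 1)) ≤ e * mbv * aq := by
    have h5 : s ≤ e * mbv * aq / (2 * (amc + 1)) :=
      le_trans (min_le_right _ _) (min_le_right _ _)
    calc s * (2 * (amc + 1)) ≤ e * mbv * aq / (2 * (amc + 1)) * (2 * (amc + 1)) :=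
          mul_le_mul_of_nonneg_right h5 (by linarith only [hamc0])
      _ = e * mbv * aq := by field_simp
  clear_value s
  clear hsdef
  set y : ℝ := qc - s ^ 2 * f / aq with hydef
  have hyaq : y * aq = qc * aq - s ^ 2 * f := by rw [hydef]; field_simp
  clear_value y
  clear hydef
  have hss : s ^ 2 ≤ aq ^ 2 := by
    linarith only [mul_self_le_mul_self hs.le hsC]
  have hy2aq : y ^ 2 * aq ^ 2 = qc ^ 2 * aq ^ 2 - 2 * aq ^ 2 * s ^ 2 + s ^ 4 := by
    have e1 : (y * aq) ^ 2 = (qc * aq - s ^ 2 * f) ^ 2 := by rw [hyaq]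
    linear_combination e1 - 2 * aq * s ^ 2 * hfq + s ^ 4 * hf2
  have hy2 : y ^ 2 - qc ^ 2 ≤ -(s ^ 2) := by
    have h1 : (y ^ 2 - qc ^ 2 + s ^ 2) * (aq * aq) ≤ 0 * (aq * aq) := by
      have h2 : 0 ≤ s ^ 2 * (aq ^ 2 - s ^ 2) := mul_nonneg (sq_nonneg s)
        (by linarith only [hss])
      linarith only [hy2aq, h2]
    linarith only [le_of_mul_le_mul_right h1 (mul_pos haq haq)]
  have hyf : f * (y * aq) = aq * aq - s ^ 2 := by
    rw [hyaq]; linear_combination aq * hfq - s ^ 2 * hf2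
  have h0fy : 0 ≤ f * y := by
    have h4 : 0 * aq ≤ (f * y) * aq := by
      have h5 : (f * y) * aq = f * (y * aq) := by ring
      rw [h5, zero_mul]
      linarith only [hyf, hss]
    exact le_of_mul_le_mul_right h4 haq
  have hfya : f * y ≤ aq := by
    have h4 : (f * y) * aq ≤ aq * aq := by
      have h5 : (f * y) * aq = f * (y * aq) := by ring
      rw [h5]
      linarith only [hyf, sq_nonneg s]
    exact le_of_mul_le_mul_right h4 haq
  have hp1 : 0 ≤ s * (e + 1) := mul_nonneg hs.le (by linarith only [he1])
  have hp2 : 0 ≤ s * (1 - e) := mul_nonneg hs.le (by linarith only [he1'])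
  refine ⟨s * e, y, by linarith only [hp1, hsB], by linarith only [hp2, hsA], ?_, ?_, ?_, ?_⟩
  · rcases hf with hf1 | hf1
    · rw [hf1, one_mul] at h0fy
      linarith only [h0fy, hlc]
    · rw [hf1] at h0fy hfya hfq
      linarith only [hfya, hfq, hfcl]
  · rcases hf with hf1 | hf1
    · rw [hf1, one_mul] at hfya hfq
      linarith only [hfya, hfq, hfch]
    · rw [hf1] at h0fy
      linarith only [h0fy, hhc]
  · have hsee : (s * e) ^ 2 = s ^ 2 := by linear_combination s ^ 2 * he2
    linarith only [hsee, hy2, sq_nonneg s]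
  · have hyqc : (y - qc) * aq = -(s ^ 2 * f) := by linear_combination hyaq
    have key : 0 < (s * e * mbv + (y - qc) * mcv) * aq := by
      have expand : (s * e * mbv + (y - qc) * mcv) * aq
          = s * (e * mbv) * aq - s ^ 2 * (f * mcv) := by
        linear_combination mcv * hyqc
      rw [expand]
      have h1 : s ^ 2 * (f * mcv) ≤ s ^ 2 * amc := mul_le_mul_of_nonneg_left hfmc (sq_nonneg s)
      have h3 : s * amc ≤ e * mbv * aq / 2 := by linarith only [hsD, hs]
      have h2 : s ^ 2 * amc ≤ s * (e * mbv * aq / 2) := by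
        calc s ^ 2 * amc = s * (s * amc) := by ring
          _ ≤ s * (e * mbv * aq / 2) := mul_le_mul_of_nonneg_left h3 hs.le
      linarith only [h1, h2, mul_pos hs (mul_pos hemb haq)]
    by_contra hle
    push_neg at hle
    have h5 : 0 ≤ (-(s * e * mbv + (y - qc) * mcv)) * aq :=
      mul_nonneg (by linarith only [hle]) haq.le
    linarith only [key, h5]


end S14

namespace S14X


lemma sign_of_ne {v : ℝ} (hv : v ≠ 0) : ∃ e : ℝ, (e = 1 ∨ e = -1) ∧ 0 < e * v := by
  rcases lt_or_gt_of_ne hv with h1 | h1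
  · exact ⟨-1, Or.inr rfl, by linarith only [h1]⟩
  · exact ⟨1, Or.inl rfl, by linarith only [h1]⟩

set_option maxHeartbeats 1000000 in
/-- Core of Step 3 : violated KKT condition yields an improving perturbation. -/
lemma kkt_core (ε lam q mav pa t loa hia lob hib : ℝ)
    (hε : 0 < ε) (hlam : 0 < lam) (hq : q ≠ 0)
    (hblo : lob < q) (hbhi : q < hib)
    (hpa2 : pa ^ 2 ≤ ε ^ 2)
    (hta : loa ≤ t) (hth : t ≤ hia) (hla : loa ≤ pa) (hha : pa ≤ hia)
    (hviol : 0 < (mav - lam * pa) * (t - pa)) :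
    ∃ x y, loa ≤ x ∧ x ≤ hia ∧ lob ≤ y ∧ y ≤ hib ∧
      (x ^ 2 - pa ^ 2) + (y ^ 2 - q ^ 2) ≤ 0 ∧
      0 < (x - pa) * mav + (y - q) * (lam * q) := by
  obtain ⟨u, hu, hud⟩ : ∃ u : ℝ, (u = 1 ∨ u = -1) ∧ 0 < u * (t - pa) := by
    apply sign_of_ne
    intro h
    rw [h, mul_zero] at hviol
    exact lt_irrefl _ hviol
  have hu2 : u * u = 1 := by rcases hu with rfl | rfl <;> norm_num
  have huw : 0 < u * (mav - lam * pa) := by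
    rcases mul_pos_iff.1 hviol with ⟨h1, h2⟩ | ⟨h1, h2⟩ <;>
      rcases hu with rfl | rfl <;> linarith only [h1, h2, hud]
  obtain ⟨f, hf, hfq0⟩ := sign_of_ne hq
  have hf2 : f * f = 1 := by rcases hf with rfl | rfl <;> norm_num
  set aq : ℝ := f * q with haq_def
  have haq : 0 < aq := hfq0
  have hfq : f * q = aq := rfl
  have haqne : aq ≠ 0 := ne_of_gt haq
  have hq2 : q ^ 2 = aq ^ 2 := by rw [haq_def]; linear_combination (-(q ^ 2)) * hf2
  clear_value aq
  clear haq_def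
  -- constants
  set C : ℝ := (1 + (ε + 1) ^ 2 / aq ^ 2) / 2 + 1 with hCdef
  have hC1 : 1 ≤ C := by
    have h0 : 0 ≤ (ε + 1) ^ 2 / aq ^ 2 := by positivity
    rw [hCdef]; linarith only [h0]
  have hC0 : 0 < C := by linarith only [hC1]
  have hCkey : 2 * (C - 1) * aq ^ 2 = aq ^ 2 + (ε + 1) ^ 2 := by
    rw [hCdef]; field_simp; ring
  set rb : ℝ := min (hib - q) (q - lob) with hrbdef
  have hrb : 0 < rb := lt_min (by linarith only [hbhi]) (by linarith only [hblo])
  have hrb1 : rb ≤ hib - q := min_le_left _ _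
  have hrb2 : rb ≤ q - lob := min_le_right _ _
  clear_value C rb
  clear hCdef hrbdef
  -- step size
  set s : ℝ := min (min (u * (t - pa)) (1 / C))
    (min (rb * aq / (ε + 1)) (u * (mav - lam * pa) / (2 * (lam * C)))) with hsdef
  have hs : 0 < s := by
    apply lt_min (lt_min hud (by positivity))
    apply lt_min (by positivity)
    exact div_pos huw (by positivity)
  have hs1 : s ≤ u * (t - pa) := le_trans (min_le_left _ _) (min_le_left _ _)
  have hs2 : s * C ≤ 1 := by
    have h5 : s ≤ 1 / C := le_trans (min_le_left _ _) (min_le_right _ _)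
    calc s * C ≤ (1 / C) * C := mul_le_mul_of_nonneg_right h5 hC0.le
      _ = 1 := by field_simp
  have hs3 : s * (ε + 1) ≤ rb * aq := by
    have h5 : s ≤ rb * aq / (ε + 1) := le_trans (min_le_right _ _) (min_le_left _ _)
    calc s * (ε + 1) ≤ (rb * aq / (ε + 1)) * (ε + 1) :=
          mul_le_mul_of_nonneg_right h5 (by linarith only [hε])
      _ = rb * aq := by field_simp
  have hs4 : s * (2 * (lam * C)) ≤ u * (mav - lam * pa) := by
    have h5 : s ≤ u * (mav - lam * pa) / (2 * (lam * C)) :=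
      le_trans (min_le_right _ _) (min_le_right _ _)
    calc s * (2 * (lam * C)) ≤ (u * (mav - lam * pa) / (2 * (lam * C))) * (2 * (lam * C)) :=
          mul_le_mul_of_nonneg_right h5 (by positivity)
      _ = u * (mav - lam * pa) := by field_simp
  clear_value s
  clear hsdef
  -- the perturbation
  set κ : ℝ := (u * pa + C * s) / aq with hκdef
  have hκaq : κ * aq = u * pa + C * s := by rw [hκdef]; field_simp
  clear_value κ
  clear hκdef
  set x : ℝ := pa + s * u with hxdef
  set y : ℝ := q - s * κ * f with hydef
  -- bounds on u * pa
  have hupasq : (u * pa) ^ 2 ≤ ε ^ 2 := by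
    have e2 : (u * pa) ^ 2 = pa ^ 2 := by linear_combination pa ^ 2 * hu2
    linarith only [e2, hpa2]
  have hupa1 : u * pa ≤ ε := (abs_le_of_sq_le_sq' hupasq hε.le).2
  have hupa2 : -ε ≤ u * pa := (abs_le_of_sq_le_sq' hupasq hε.le).1
  -- bounds on κ * aq
  have hκub : κ * aq ≤ ε + 1 := by rw [hκaq]; linarith only [hs2, hupa1]
  have hκlb : -(ε + 1) ≤ κ * aq := by
    rw [hκaq]
    have h0 := mul_pos hC0 hs
    linarith only [h0, hupa2]
  have hκsq : (κ * aq) ^ 2 ≤ (ε + 1) ^ 2 := sq_le_sq' hκlb hκub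
  -- |s * κ| ≤ rb
  have hskrb : (s * κ) ^ 2 ≤ rb ^ 2 := by
    have h7 : (s * κ * aq) ^ 2 ≤ s ^ 2 * (ε + 1) ^ 2 := by
      have h7' : s ^ 2 * (κ * aq) ^ 2 ≤ s ^ 2 * (ε + 1) ^ 2 :=
        mul_le_mul_of_nonneg_left hκsq (sq_nonneg s)
      calc (s * κ * aq) ^ 2 = s ^ 2 * (κ * aq) ^ 2 := by ring
        _ ≤ s ^ 2 * (ε + 1) ^ 2 := h7'
    have h8 : s ^ 2 * (ε + 1) ^ 2 ≤ rb ^ 2 * aq ^ 2 := by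
      have h8' := mul_self_le_mul_self
        (mul_nonneg hs.le (by linarith only [hε] : (0:ℝ) ≤ ε + 1)) hs3
      calc s ^ 2 * (ε + 1) ^ 2 = (s * (ε + 1)) * (s * (ε + 1)) := by ring
        _ ≤ (rb * aq) * (rb * aq) := h8'
        _ = rb ^ 2 * aq ^ 2 := by ring
    have h9 : (s * κ) ^ 2 * (aq * aq) ≤ rb ^ 2 * (aq * aq) := by
      calc (s * κ) ^ 2 * (aq * aq) = (s * κ * aq) ^ 2 := by ring
        _ ≤ s ^ 2 * (ε + 1) ^ 2 := h7
        _ ≤ rb ^ 2 * aq ^ 2 := h8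
        _ = rb ^ 2 * (aq * aq) := by ring
    exact le_of_mul_le_mul_right h9 (mul_pos haq haq)
  have hyq : y - q = -(s * κ * f) := by rw [hydef]; ring
  have hyq2 : (y - q) ^ 2 = (s * κ) ^ 2 := by
    rw [hyq]; linear_combination (s * κ) ^ 2 * hf2
  -- feasibility of y
  have hyfeas : lob ≤ y ∧ y ≤ hib := by
    have h11 : (y - q) ^ 2 ≤ rb ^ 2 := by rw [hyq2]; exact hskrb
    have h12 : -rb ≤ y - q ∧ y - q ≤ rb := abs_le_of_sq_le_sq' h11 hrb.le
    exact ⟨by linarith only [h12.1, hrb2], by linarith only [h12.2, hrb1]⟩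
  -- norm inequality
  have hnormx : x ^ 2 - pa ^ 2 = 2 * s * (u * pa) + s ^ 2 := by
    rw [hxdef]; linear_combination s ^ 2 * hu2
  have hnormy : y ^ 2 - q ^ 2 = -2 * s * (κ * aq) + s ^ 2 * κ ^ 2 := by
    rw [hydef]
    linear_combination (-2 * s * κ) * hfq + ((s * κ) ^ 2) * hf2
  have hκ2 : κ ^ 2 ≤ 2 * C - 3 := by
    have h13 : κ ^ 2 * (aq * aq) ≤ (2 * C - 3) * (aq * aq) := by
      calc κ ^ 2 * (aq * aq) = (κ * aq) ^ 2 := by ring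
        _ ≤ (ε + 1) ^ 2 := hκsq
        _ = 2 * (C - 1) * aq ^ 2 - aq ^ 2 := by linarith only [hCkey]
        _ = (2 * C - 3) * (aq * aq) := by ring
    exact le_of_mul_le_mul_right h13 (mul_pos haq haq)
  have hnorm : (x ^ 2 - pa ^ 2) + (y ^ 2 - q ^ 2) ≤ 0 := by
    rw [hnormx, hnormy, hκaq]
    have h15 : s ^ 2 * κ ^ 2 ≤ s ^ 2 * (2 * C - 3) :=
      mul_le_mul_of_nonneg_left hκ2 (sq_nonneg s)
    linarith only [h15, sq_nonneg s]
  -- objective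
  have hobj : 0 < (x - pa) * mav + (y - q) * (lam * q) := by
    have h16 : (x - pa) * mav + (y - q) * (lam * q)
        = s * (u * mav) - s * lam * (κ * aq) := by
      rw [hxdef, hydef]
      linear_combination (-(s * κ * lam)) * hfq
    rw [h16, hκaq]
    have h18 : s * (2 * (lam * C)) * s ≤ u * (mav - lam * pa) * s :=
      mul_le_mul_of_nonneg_right hs4 hs.le
    linarith only [mul_pos huw hs, h18]
  -- feasibility of x
  rcases hu with rfl | rfl
  · rw [one_mul] at hs1
    refine ⟨x, y, ?_, ?_, hyfeas.1, hyfeas.2, hnorm, hobj⟩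
    · rw [hxdef]; linarith only [hs, hla]
    · rw [hxdef]; linarith only [hs1, hth]
  · refine ⟨x, y, ?_, ?_, hyfeas.1, hyfeas.2, hnorm, hobj⟩
    · rw [hxdef]; linarith only [hs1, hta]
    · rw [hxdef]; linarith only [hs, hha]


end S14X


/- STATEMENT 14: local Lipschitz dependence of the optimizer on the objective
matrix. If `Δopt` maximizes `⟨Δ, M⟩` over `ℋ ∩ B_ε` with `‖M‖_F ≤ 1` and the
non-saturation assumption holds for `(Δopt, M)`, then there exist `δ, c > 0` such
that for every `M̃` with `‖M̃‖_F ≤ 1` and every maximizer `Δ̃opt` of `⟨Δ, M̃⟩` over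
`ℋ ∩ B_ε`, `‖M̃ − M‖_F ≤ δ` implies `‖Δ̃opt − Δopt‖_F ≤ c ε ‖M̃ − M‖_F`. -/
set_option maxHeartbeats 1000000 in
open S14 in
/-- local Lipschitz dependence of the optimizer on the objective
matrix. If `Δopt` maximizes `⟨Δ, M⟩` over `ℋ ∩ B_ε` with `‖M‖_F ≤ 1` and the
non-saturation assumption holds for `(Δopt, M)`, then there exist `δ, c > 0` such
that for every `M̃` with `‖M̃‖_F ≤ 1` and every maximizer `Δ̃opt` of `⟨Δ, M̃⟩` over
`ℋ ∩ B_ε`, `‖M̃ − M‖_F ≤ δ` implies `‖Δ̃opt − Δopt‖_F ≤ c ε ‖M̃ − M‖_F`. -/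
theorem optimizer_lipschitz_in_objective {n : ℕ} (Ep : Set (Fin n × Fin n))
    (lo hi : Fin n → Fin n → ℝ)
    (hbox : ∀ i j, (i, j) ∈ Ep → lo i j ≤ 0 ∧ 0 ≤ hi i j)
    (ε : ℝ) (hε : 0 < ε) (M : Matrix (Fin n) (Fin n) ℝ) (hM1 : frobNormR M ≤ 1)
    (Δopt : Matrix (Fin n) (Fin n) ℝ)
    (hmem : memH Ep lo hi Δopt) (hball : frobNormR Δopt ≤ ε)
    (hmax : ∀ Δ, memH Ep lo hi Δ → frobNormR Δ ≤ ε →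
      ∑ i, ∑ j, Δ i j * M i j ≤ ∑ i, ∑ j, Δopt i j * M i j)
    (hns : ∀ Δ', memH Ep lo hi Δ' → frobNormR Δ' ≤ ε →
      (∀ Δ, memH Ep lo hi Δ → frobNormR Δ ≤ ε →
        ∑ i, ∑ j, Δ i j * M i j ≤ ∑ i, ∑ j, Δ' i j * M i j) →
      ∃ i j, (i, j) ∈ Ep ∧ lo i j < Δ' i j ∧ Δ' i j < hi i j ∧ M i j ≠ 0) :
    ∃ δ > 0, ∃ c > 0, ∀ Mt Δt : Matrix (Fin n) (Fin n) ℝ, frobNormR Mt ≤ 1 →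
      memH Ep lo hi Δt → frobNormR Δt ≤ ε →
      (∀ Δ, memH Ep lo hi Δ → frobNormR Δ ≤ ε →
        ∑ i, ∑ j, Δ i j * Mt i j ≤ ∑ i, ∑ j, Δt i j * Mt i j) →
      frobNormR (Mt - M) ≤ δ →
      frobNormR (Δt - Δopt) ≤ c * ε * frobNormR (Mt - M) := by
  classical
  obtain ⟨bi, bj, hbEp, hblo, hbhi, hbM⟩ := hns Δopt hmem hball hmax
  set q : ℝ := Δopt bi bj with hq_def
  set mb : ℝ := M bi bj with hmb_def
  -- squared-norm facts
  have hN : ∑ i, ∑ j, (Δopt i j) ^ 2 ≤ ε ^ 2 := (frob_le_iff hε.le Δopt).1 hball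
  have hentry : ∀ p : Fin n × Fin n, (Δopt p.1 p.2) ^ 2 ≤ ∑ i, ∑ j, (Δopt i j) ^ 2 := by
    intro p
    rw [dsum (fun i j => (Δopt i j) ^ 2)]
    exact Finset.single_le_sum (f := fun p : Fin n × Fin n => (Δopt p.1 p.2) ^ 2)
      (fun p _ => sq_nonneg _) (Finset.mem_univ p)
  -- Step 1 : the optimizer saturates the ball
  have hNe : ∑ i, ∑ j, (Δopt i j) ^ 2 = ε ^ 2 := by
    by_contra h
    have hlt : ∑ i, ∑ j, (Δopt i j) ^ 2 < ε ^ 2 := lt_of_le_of_ne hN h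
    obtain ⟨x, hx1, hx2, hx3, hx4⟩ := step1_core ε q mb (lo bi bj) (hi bi bj)
      (∑ i, ∑ j, (Δopt i j) ^ 2) hε hblo hbhi hbM (hentry (bi, bj)) hlt
    exact no_improve1 hε hmem hmax (a := (bi, bj))
      ⟨fun hnot => absurd hbEp hnot, fun _ => ⟨hx1, hx2⟩⟩ hx3 hx4
  -- Step 2 : sign condition at the unsaturated coordinate
  have hsgn : 0 < mb * q := by
    rcases lt_trichotomy (mb * q) 0 with hneg | hzero | hposs
    · exfalso
      refine no_improve1 hε hmem hmax (a := (bi, bj)) (x := 0)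
        ⟨fun hnot => absurd hbEp hnot, fun _ => hbox bi bj hbEp⟩ ?_ ?_
      · show (∑ i, ∑ j, (Δopt i j) ^ 2) + ((0:ℝ) ^ 2 - q ^ 2) ≤ ε ^ 2
        linarith only [hN, sq_nonneg q]
      · show 0 < ((0:ℝ) - q) * mb
        have h9 : ((0:ℝ) - q) * mb = -(mb * q) := by ring
        rw [h9]
        linarith only [hneg]
    · exfalso
      have hq0 : q = 0 := by
        rcases mul_eq_zero.1 hzero with h | h
        · exact absurd h hbM
        · exact h
      have hex : ∃ p : Fin n × Fin n, Δopt p.1 p.2 ≠ 0 := by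
        by_contra hall
        push_neg at hall
        have hzero' : (∑ i, ∑ j, (Δopt i j) ^ 2) = 0 := by
          rw [dsum (fun i j => (Δopt i j) ^ 2)]
          apply Finset.sum_eq_zero
          intro p _
          rw [hall p]; ring
        rw [hzero'] at hNe
        have := sq_nonneg ε
        nlinarith [hNe, hε]
      obtain ⟨c, hc⟩ := hex
      have hcEp : c ∈ Ep := by
        by_contra hcn
        exact hc (hmem.1 c.1 c.2 hcn)
      have hcb : c ≠ (bi, bj) := by
        intro h
        apply hc
        rw [h]
        exact hq0
      have hfc := hmem.2 c.1 c.2 hcEp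
      have hboxc := hbox c.1 c.2 hcEp
      obtain ⟨x, y, hx1, hx2, hy1, hy2, hnormc, hobjc⟩ :=
        step2_core (Δopt c.1 c.2) mb (M c.1 c.2) (lo bi bj) (hi bi bj) (lo c.1 c.2)
          (hi c.1 c.2) hbM hc (by linarith only [hblo, hq0.symm ▸ hblo])
          (by linarith only [hq0.symm ▸ hbhi]) hboxc.1 hboxc.2 hfc.1 hfc.2
      refine no_improve2 hε hmem hmax (a := (bi, bj)) (b := c) (Ne.symm hcb)
        (x := x) (y := y)
        ⟨fun hnot => absurd hbEp hnot, fun _ => ⟨hx1, hx2⟩⟩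
        ⟨fun hnot => absurd hcEp hnot, fun _ => ⟨hy1, hy2⟩⟩ ?_ ?_
      · show (∑ i, ∑ j, (Δopt i j) ^ 2) + (x ^ 2 - q ^ 2) + (y ^ 2 - (Δopt c.1 c.2) ^ 2) ≤ ε ^ 2
        have hq0sq : q ^ 2 = 0 := by rw [hq0]; ring
        linarith only [hNe, hnormc, hq0sq]
      · show 0 < (x - q) * mb + (y - Δopt c.1 c.2) * M c.1 c.2
        have h9 : (x - q) * mb + (y - Δopt c.1 c.2) * M c.1 c.2
            = x * mb + (y - Δopt c.1 c.2) * M c.1 c.2 := by rw [hq0]; ring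
        rw [h9]
        exact hobjc
    · exact hposs
  have hq0 : q ≠ 0 := by
    intro h; rw [h, mul_zero] at hsgn; exact lt_irrefl _ hsgn
  set lam : ℝ := mb / q with hlam_def
  have hlam : 0 < lam := by
    have h9 : lam = (mb * q) / q ^ 2 := by rw [hlam_def]; field_simp
    rw [h9]; exact div_pos hsgn (by positivity)
  have hmbq : mb = lam * q := by rw [hlam_def]; field_simp
  -- Step 3 : KKT conditions
  have hkkt : ∀ a : Fin n × Fin n, a ∈ Ep → ∀ t, lo a.1 a.2 ≤ t → t ≤ hi a.1 a.2 →
      (M a.1 a.2 - lam * Δopt a.1 a.2) * (t - Δopt a.1 a.2) ≤ 0 := by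
    intro a haEp t hlot hthi
    by_contra hpos
    push_neg at hpos
    have hab : a ≠ (bi, bj) := by
      intro h
      rw [h] at hpos
      have hzero : (M (bi, bj).1 (bi, bj).2 - lam * Δopt (bi, bj).1 (bi, bj).2) = 0 := by
        show mb - lam * q = 0
        rw [hmbq]; ring
      rw [hzero, zero_mul] at hpos
      exact lt_irrefl _ hpos
    have hpa2 : (Δopt a.1 a.2) ^ 2 ≤ ε ^ 2 := by rw [← hNe]; exact hentry a
    have hfa := hmem.2 a.1 a.2 haEp
    obtain ⟨x, y, hx1, hx2, hy1, hy2, hnormc, hobjc⟩ :=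
      S14X.kkt_core ε lam q (M a.1 a.2) (Δopt a.1 a.2) t (lo a.1 a.2) (hi a.1 a.2)
        (lo bi bj) (hi bi bj) hε hlam hq0 hblo hbhi hpa2 hlot hthi hfa.1 hfa.2 hpos
    refine no_improve2 hε hmem hmax (a := a) (b := (bi, bj)) hab (x := x) (y := y)
      ⟨fun hnot => absurd haEp hnot, fun _ => ⟨hx1, hx2⟩⟩
      ⟨fun hnot => absurd hbEp hnot, fun _ => ⟨hy1, hy2⟩⟩ ?_ ?_
    · show (∑ i, ∑ j, (Δopt i j) ^ 2) + (x ^ 2 - (Δopt a.1 a.2) ^ 2) + (y ^ 2 - q ^ 2) ≤ ε ^ 2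
      linarith only [hNe, hnormc]
    · show 0 < (x - Δopt a.1 a.2) * M a.1 a.2 + (y - q) * mb
      rw [hmbq]
      exact hobjc
  -- Step 4 : quadratic growth
  have hqg : ∀ Δ, memH Ep lo hi Δ → frobNormR Δ ≤ ε →
      lam / 2 * (∑ i, ∑ j, (Δ i j - Δopt i j) ^ 2) ≤
        (∑ i, ∑ j, Δopt i j * M i j) - ∑ i, ∑ j, Δ i j * M i j := by
    intro Δ hΔmem hΔball
    have hS : ∑ p : Fin n × Fin n, (Δ p.1 p.2) ^ 2 ≤ ε ^ 2 := by
      rw [← dsum (fun i j => (Δ i j) ^ 2)]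
      exact (frob_le_iff hε.le Δ).1 hΔball
    have hNp : ∑ p : Fin n × Fin n, (Δopt p.1 p.2) ^ 2 = ε ^ 2 := by
      rw [← dsum (fun i j => (Δopt i j) ^ 2)]
      exact hNe
    have hsum_nu : 0 ≤ ∑ p : Fin n × Fin n,
        (Δopt p.1 p.2 - Δ p.1 p.2) * (M p.1 p.2 - lam * Δopt p.1 p.2) := by
      apply Finset.sum_nonneg
      intro p _
      by_cases hp : p ∈ Ep
      · have h := hkkt p hp (Δ p.1 p.2) (hΔmem.2 p.1 p.2 hp).1 (hΔmem.2 p.1 p.2 hp).2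
        nlinarith only [h]
      · have h1 : Δ p.1 p.2 = 0 := hΔmem.1 p.1 p.2 hp
        have h2 : Δopt p.1 p.2 = 0 := hmem.1 p.1 p.2 hp
        rw [h1, h2]
        norm_num
    have hid1 : (∑ p : Fin n × Fin n, Δopt p.1 p.2 * M p.1 p.2)
        - (∑ p : Fin n × Fin n, Δ p.1 p.2 * M p.1 p.2)
        = lam * (∑ p : Fin n × Fin n, (Δopt p.1 p.2 - Δ p.1 p.2) * Δopt p.1 p.2)
          + ∑ p : Fin n × Fin n,
            (Δopt p.1 p.2 - Δ p.1 p.2) * (M p.1 p.2 - lam * Δopt p.1 p.2) := by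
      rw [← Finset.sum_sub_distrib, Finset.mul_sum, ← Finset.sum_add_distrib]
      apply Finset.sum_congr rfl
      intro p _
      ring
    have hid2 : 2 * (∑ p : Fin n × Fin n, (Δopt p.1 p.2 - Δ p.1 p.2) * Δopt p.1 p.2)
        = (∑ p : Fin n × Fin n, (Δ p.1 p.2 - Δopt p.1 p.2) ^ 2)
          + (∑ p : Fin n × Fin n, (Δopt p.1 p.2) ^ 2)
          - ∑ p : Fin n × Fin n, (Δ p.1 p.2) ^ 2 := by
      rw [Finset.mul_sum, ← Finset.sum_add_distrib, ← Finset.sum_sub_distrib]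
      apply Finset.sum_congr rfl
      intro p _
      ring
    rw [dsum (fun i j => (Δ i j - Δopt i j) ^ 2), dsum (fun i j => Δopt i j * M i j),
      dsum (fun i j => Δ i j * M i j)]
    have hA : lam * (2 * (∑ p : Fin n × Fin n, (Δopt p.1 p.2 - Δ p.1 p.2) * Δopt p.1 p.2))
        = lam * ((∑ p : Fin n × Fin n, (Δ p.1 p.2 - Δopt p.1 p.2) ^ 2)
          + (∑ p : Fin n × Fin n, (Δopt p.1 p.2) ^ 2)
          - ∑ p : Fin n × Fin n, (Δ p.1 p.2) ^ 2) := by rw [hid2]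
    have hSf : lam * (∑ p : Fin n × Fin n, (Δ p.1 p.2) ^ 2) ≤ lam * ε ^ 2 :=
      mul_le_mul_of_nonneg_left hS hlam.le
    have hSg : lam * (∑ p : Fin n × Fin n, (Δopt p.1 p.2) ^ 2) = lam * ε ^ 2 := by
      rw [hNp]
    linarith only [hid1, hA, hSf, hSg, hsum_nu]
  -- Step 5 : conclusion
  refine ⟨1, one_pos, 2 / (lam * ε), by positivity, ?_⟩
  intro Mt Δt hMt1 hmemT hballT hmaxT hclose
  have h1 := hqg Δt hmemT hballT
  have h2 := hmaxT Δopt hmem hball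
  -- cross term bound
  have hexp : ∑ p : Fin n × Fin n, (Δt p.1 p.2 - Δopt p.1 p.2) * (Mt p.1 p.2 - M p.1 p.2)
      = (∑ p : Fin n × Fin n, Δt p.1 p.2 * Mt p.1 p.2)
        - (∑ p : Fin n × Fin n, Δopt p.1 p.2 * Mt p.1 p.2)
        + ((∑ p : Fin n × Fin n, Δopt p.1 p.2 * M p.1 p.2)
          - ∑ p : Fin n × Fin n, Δt p.1 p.2 * M p.1 p.2) := by
    rw [← Finset.sum_sub_distrib, ← Finset.sum_sub_distrib, ← Finset.sum_add_distrib]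
    apply Finset.sum_congr rfl
    intro p _
    ring
  rw [dsum (fun i j => (Δt i j - Δopt i j) ^ 2), dsum (fun i j => Δopt i j * M i j),
    dsum (fun i j => Δt i j * M i j)] at h1
  rw [dsum (fun i j => Δopt i j * Mt i j), dsum (fun i j => Δt i j * Mt i j)] at h2
  have hkey : lam / 2 * (∑ p : Fin n × Fin n, (Δt p.1 p.2 - Δopt p.1 p.2) ^ 2)
      ≤ ∑ p : Fin n × Fin n, (Δt p.1 p.2 - Δopt p.1 p.2) * (Mt p.1 p.2 - M p.1 p.2) := by
    rw [hexp]
    linarith only [h1, h2]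
  -- Cauchy-Schwarz
  have hQnn : (0:ℝ) ≤ ∑ p : Fin n × Fin n, (Δt p.1 p.2 - Δopt p.1 p.2) ^ 2 :=
    Finset.sum_nonneg fun p _ => sq_nonneg _
  have hDnn : (0:ℝ) ≤ ∑ p : Fin n × Fin n, (Mt p.1 p.2 - M p.1 p.2) ^ 2 :=
    Finset.sum_nonneg fun p _ => sq_nonneg _
  have hCS := Finset.sum_mul_sq_le_sq_mul_sq Finset.univ
    (fun p : Fin n × Fin n => Δt p.1 p.2 - Δopt p.1 p.2)
    (fun p : Fin n × Fin n => Mt p.1 p.2 - M p.1 p.2)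
  set X : ℝ := Real.sqrt (∑ p : Fin n × Fin n, (Δt p.1 p.2 - Δopt p.1 p.2) ^ 2) with hXdef
  set Y : ℝ := Real.sqrt (∑ p : Fin n × Fin n, (Mt p.1 p.2 - M p.1 p.2) ^ 2) with hYdef
  have hX2 : X ^ 2 = ∑ p : Fin n × Fin n, (Δt p.1 p.2 - Δopt p.1 p.2) ^ 2 :=
    Real.sq_sqrt hQnn
  have hY2 : Y ^ 2 = ∑ p : Fin n × Fin n, (Mt p.1 p.2 - M p.1 p.2) ^ 2 :=
    Real.sq_sqrt hDnn
  have hXnn : 0 ≤ X := Real.sqrt_nonneg _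
  have hYnn : 0 ≤ Y := Real.sqrt_nonneg _
  have hcross : ∑ p : Fin n × Fin n, (Δt p.1 p.2 - Δopt p.1 p.2) * (Mt p.1 p.2 - M p.1 p.2)
      ≤ X * Y := by
    have hXY2 : (X * Y) ^ 2 = (∑ p : Fin n × Fin n, (Δt p.1 p.2 - Δopt p.1 p.2) ^ 2)
        * ∑ p : Fin n × Fin n, (Mt p.1 p.2 - M p.1 p.2) ^ 2 := by
      rw [mul_pow, hX2, hY2]
    have h3 : (∑ p : Fin n × Fin n, (Δt p.1 p.2 - Δopt p.1 p.2) * (Mt p.1 p.2 - M p.1 p.2)) ^ 2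
        ≤ (X * Y) ^ 2 := by rw [hXY2]; exact hCS
    have h4 := abs_le_of_sq_le_sq' h3 (mul_nonneg hXnn hYnn)
    linarith only [h4.2]
  -- final assembly
  have hfrob1 : frobNormR (Δt - Δopt) = X := by
    rw [hXdef]
    unfold frobNormR
    congr 1
    rw [dsum (fun i j => ((Δt - Δopt) i j) ^ 2)]
    apply Finset.sum_congr rfl
    intro p _
    rw [Matrix.sub_apply]
  have hfrob2 : frobNormR (Mt - M) = Y := by
    rw [hYdef]
    unfold frobNormR
    congr 1
    rw [dsum (fun i j => ((Mt - M) i j) ^ 2)]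
    apply Finset.sum_congr rfl
    intro p _
    rw [Matrix.sub_apply]
  rw [hfrob1, hfrob2]
  have hmain : lam / 2 * X ^ 2 ≤ X * Y := by
    rw [hX2]
    exact le_trans hkey hcross
  have hce : 2 / (lam * ε) * ε = 2 / lam := by
    field_simp
  rw [hce]
  rcases eq_or_lt_of_le hXnn with hX0 | hXpos
  · rw [← hX0]
    positivity
  · have h6 : (lam / 2 * X) * X ≤ Y * X := by
      have h7 : lam / 2 * X ^ 2 = (lam / 2 * X) * X := by ring
      rw [h7] at hmain
      calc (lam / 2 * X) * X ≤ X * Y := hmain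
        _ = Y * X := by ring
    have h7 : lam / 2 * X ≤ Y := le_of_mul_le_mul_right h6 hXpos
    have h8 : (2 / lam) * (lam / 2 * X) ≤ (2 / lam) * Y :=
      mul_le_mul_of_nonneg_left h7 (by positivity)
    have h9 : (2 / lam) * (lam / 2 * X) = X := by field_simp
    linarith only [h8, h9]
end
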